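/- Let M be a finitely generated 𝔖-module such that (i) the torsion submodule of M is killed by p^N for some N ∈ ℕ (this holds for every finitely generated generalized Breuil–Kisin module by Bhatt–Morrow–Scholze), and (ii) for every n > 0 the quotient M/p^nM is u-torsion free. Then M is isomorphic as an 𝔖-module to a finite direct sum 𝔖^r ⊕ ⊕_{i=1}^{s} 𝔖/(p^{e_i}) for some r, s ∈ ℕ and exponents e_i ≥ 1; equivalently, there exists a finitely generated ℤ_p-module N with M ≅ N ⊗_{ℤ_p} 𝔖 as 𝔖-modules. -/

import Mathlib

open PowerSeries

section Key

variable (p : ℕ) [Fact p.Prime] (k : Type*) [Field k] [CharP k p] [PerfectField k]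

local notation "W" => WittVector p k
local notation "𝕊" => PowerSeries (WittVector p k)

set_option maxHeartbeats 1600000 in
set_option synthInstance.maxHeartbeats 400000 in
theorem key_stmt3 (M : Type*) [AddCommGroup M] [Module 𝕊 M]
    [Module.Finite 𝕊 M]
    (N : ℕ)
    (htor : ∀ x : M, (∃ f : 𝕊, f ≠ 0 ∧ f • x = 0) → ((p : 𝕊) ^ N) • x = 0)
    (h : ∀ n : ℕ, 0 < n → ∀ x : M,
      (∃ y : M, (PowerSeries.X : 𝕊) • x = ((p : 𝕊) ^ n) • y) →
      ∃ y : M, x = ((p : 𝕊) ^ n) • y) :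
    ∃ (r s : ℕ) (e : Fin s → ℕ), (∀ i, 1 ≤ e i) ∧
      Nonempty (M ≃ₗ[𝕊]
        ((Fin r → 𝕊) × ((i : Fin s) → 𝕊 ⧸ Ideal.span {((p : 𝕊) ^ (e i))}))) := by
  classical
  letI : IsDiscreteValuationRing W := WittVector.isDiscreteValuationRing
  have hpirr : Irreducible (p : W) := WittVector.irreducible p
  have hpW : (p : W) ≠ 0 := WittVector.p_nonzero p k
  have hC : ∀ w : W, algebraMap W 𝕊 w = PowerSeries.C w := by
    intro w; rw [PowerSeries.algebraMap_apply]; simp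
  have hCp : ∀ m : ℕ, ((p : 𝕊)) ^ m = PowerSeries.C ((p : W) ^ m) := by
    intro m; rw [map_pow, ← map_natCast (PowerSeries.C (R := W)) p]
  have hXne : (PowerSeries.X : 𝕊) ≠ 0 := PowerSeries.X_ne_zero
  have hpRne : ∀ m : ℕ, ((p : 𝕊)) ^ m ≠ 0 := by
    intro m hm
    apply pow_ne_zero m hpW
    have := congrArg (PowerSeries.constantCoeff) hm
    rwa [hCp, PowerSeries.constantCoeff_C, map_zero] at this
  -- M is u-torsion free
  have utf : ∀ x : M, (PowerSeries.X : 𝕊) • x = 0 → x = 0 := by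
    intro x hx
    by_cases hN : N = 0
    · have := htor x ⟨PowerSeries.X, hXne, hx⟩
      rwa [hN, pow_zero, one_smul] at this
    · obtain ⟨y, hy⟩ := h N (Nat.pos_of_ne_zero hN) x ⟨0, by rw [hx, smul_zero]⟩
      have hx2 : (p : 𝕊) ^ N • x = 0 := htor x ⟨PowerSeries.X, hXne, hx⟩
      have hy2 : ((p : 𝕊) ^ N * (p : 𝕊) ^ N) • y = 0 := by
        rw [mul_smul, ← hy]; exact hx2
      have hy3 : (p : 𝕊) ^ N • y = 0 :=
        htor y ⟨(p : 𝕊) ^ N * (p : 𝕊) ^ N, mul_ne_zero (hpRne N) (hpRne N), hy2⟩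
      rw [hy, hy3]
  -- the quotient Q = M / X•M
  set uM : Submodule 𝕊 M := LinearMap.range (LinearMap.lsmul 𝕊 M PowerSeries.X) with huM
  set π : M →ₗ[𝕊] M ⧸ uM := uM.mkQ with hπ
  have hπsurj : Function.Surjective π := Submodule.mkQ_surjective uM
  have hXQ : ∀ q : M ⧸ uM, (PowerSeries.X : 𝕊) • q = 0 := by
    intro q
    obtain ⟨m, rfl⟩ := hπsurj q
    rw [← map_smul]
    exact (Submodule.Quotient.mk_eq_zero _).mpr ⟨m, rfl⟩
  letI : Module W (M ⧸ uM) := Module.compHom _ (algebraMap W 𝕊)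
  have hWsmul : ∀ (w : W) (q : M ⧸ uM), w • q = (PowerSeries.C w) • q := by
    intro w q; rw [← hC]; rfl
  -- reduction of 𝕊-scalars to W-scalars on Q
  have hred : ∀ (r : 𝕊) (q : M ⧸ uM), r • q = (PowerSeries.constantCoeff r) • q := by
    intro r q
    conv_lhs => rw [PowerSeries.eq_shift_mul_X_add_const r]
    rw [add_smul, mul_comm, mul_smul, hXQ, zero_add, ← hWsmul]
  -- Q is finitely generated over W
  obtain ⟨S, hS⟩ : ∃ S : Finset M, Submodule.span 𝕊 (S : Set M) = ⊤ :=
    Module.Finite.fg_top (R := 𝕊) (M := M)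
  have hQgen : ∀ q : M ⧸ uM, q ∈ Submodule.span W (π '' S) := by
    intro q
    obtain ⟨m, rfl⟩ := hπsurj q
    have hm : m ∈ Submodule.span 𝕊 (S : Set M) := by rw [hS]; trivial
    induction hm using Submodule.span_induction with
    | mem x hx => exact Submodule.subset_span ⟨x, hx, rfl⟩
    | zero => rw [map_zero]; exact Submodule.zero_mem _
    | add x y hx hy ihx ihy => rw [map_add]; exact Submodule.add_mem _ ihx ihy
    | smul r x hx ihx =>
        rw [map_smul, hred]
        exact Submodule.smul_mem _ _ ihx
  letI : Module.Finite W (M ⧸ uM) := by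
    refine ⟨⟨S.image π, ?_⟩⟩
    rw [Finset.coe_image]
    exact top_unique fun q _ => hQgen q
  letI : IsScalarTower W 𝕊 (M ⧸ uM) := by
    refine ⟨fun w r q => ?_⟩
    show (w • r) • q = (algebraMap W 𝕊 w) • r • q
    rw [Algebra.smul_def, mul_smul]
  -- structure theorem for Q over W (via ULift to fix universes)
  letI : Module.Finite W (ULift.{u_1} (M ⧸ uM)) :=
    Module.Finite.equiv (ULift.moduleEquiv : ULift (M ⧸ uM) ≃ₗ[W] (M ⧸ uM)).symm
  obtain ⟨n, ι, hι, qi, hqi, e0, ⟨φ0⟩⟩ :=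
    Module.equiv_free_prod_directSum (R := W) (M := ULift.{u_1} (M ⧸ uM))
  have hspan : ∀ i : ι, (Submodule.span W {qi i ^ e0 i} : Ideal W) = Ideal.span {(p : W) ^ e0 i} := by
    intro i
    rw [Ideal.submodule_span_eq, Ideal.span_singleton_eq_span_singleton]
    exact (IsDiscreteValuationRing.associated_of_irreducible _ (hqi i) hpirr).pow_pow
  let ψ : (M ⧸ uM) ≃ₗ[W] (Fin n → W) × ((i : ι) → W ⧸ Ideal.span {(p : W) ^ e0 i}) :=
    (ULift.moduleEquiv.symm.trans φ0).trans
      (LinearEquiv.prodCongr (Finsupp.linearEquivFunOnFinite W W (Fin n))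
        ((DirectSum.linearEquivFunOnFintype W ι _).trans
          (LinearEquiv.piCongrRight fun i => Submodule.quotEquivOfEq _ _ (hspan i))))
  set gQ : Fin n → M ⧸ uM := fun j => ψ.symm (Pi.single j 1, 0) with hgQ
  set tQ : ι → M ⧸ uM := fun i => ψ.symm (0, Pi.single i (Submodule.Quotient.mk 1)) with htQ
  -- computation lemma
  have hcomp : ∀ (a : Fin n → W) (b : ι → W),
      ψ (∑ j, a j • gQ j + ∑ i, b i • tQ i)
        = (a, fun i => Submodule.Quotient.mk (b i)) := by
    intro a b
    rw [map_add, map_sum, map_sum]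
    simp_rw [map_smul, hgQ, htQ, LinearEquiv.apply_symm_apply]
    refine Prod.ext ?_ ?_
    · rw [Prod.fst_add, Prod.fst_sum, Prod.fst_sum]
      simp_rw [Prod.smul_fst, smul_zero, Finset.sum_const_zero, add_zero,
        ← Pi.single_smul, smul_eq_mul, mul_one]
      exact Finset.univ_sum_single a
    · rw [Prod.snd_add, Prod.snd_sum, Prod.snd_sum]
      simp_rw [Prod.smul_snd, smul_zero, Finset.sum_const_zero, zero_add,
        ← Pi.single_smul, ← Submodule.Quotient.mk_smul, smul_eq_mul, mul_one]
      exact Finset.univ_sum_single _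
  -- (A) torsion of tQ
  have hAQ : ∀ i : ι, ((p : W) ^ e0 i) • tQ i = 0 := by
    intro i
    apply ψ.injective
    have h2 : ((p : W) ^ e0 i) • tQ i
        = ∑ j, (0 : Fin n → W) j • gQ j + ∑ i', (Pi.single i ((p : W) ^ e0 i) : ι → W) i' • tQ i' := by
      simp [Pi.single_apply, ite_smul]
    rw [h2, hcomp, map_zero]
    have h3 : ∀ i', (Submodule.Quotient.mk ((Pi.single i ((p : W) ^ e0 i) : ι → W) i') :
        W ⧸ Ideal.span {(p : W) ^ e0 i'}) = 0 := by
      intro i'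
      rcases eq_or_ne i' i with rfl | hne
      · rw [Pi.single_eq_same]
        exact (Submodule.Quotient.mk_eq_zero _).mpr (Ideal.subset_span rfl)
      · rw [Pi.single_eq_of_ne hne]
        exact Submodule.Quotient.mk_zero _
    exact Prod.ext rfl (funext fun i' => h3 i')
  -- (B) generation
  have hBQ : ∀ x : M ⧸ uM, x ∈ Submodule.span W (Set.range gQ ∪ Set.range tQ) := by
    intro x
    choose b hb using fun i => Submodule.Quotient.mk_surjective _ ((ψ x).2 i)
    have hx : x = ∑ j, (ψ x).1 j • gQ j + ∑ i, b i • tQ i := by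
      apply ψ.injective
      rw [hcomp]
      rw [show (fun i => (Submodule.Quotient.mk (b i) : W ⧸ Ideal.span {(p : W) ^ e0 i}))
        = (ψ x).2 from funext hb]
    rw [hx]
    exact Submodule.add_mem _
      (Submodule.sum_mem _ fun j _ => Submodule.smul_mem _ _
        (Submodule.subset_span (Or.inl ⟨j, rfl⟩)))
      (Submodule.sum_mem _ fun i _ => Submodule.smul_mem _ _
        (Submodule.subset_span (Or.inr ⟨i, rfl⟩)))
  -- (C) relations
  have hCQ : ∀ (a : Fin n → W) (b : ι → W),
      (∑ j, a j • gQ j + ∑ i, b i • tQ i = 0) →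
      (∀ j, a j = 0) ∧ (∀ i, b i ∈ Ideal.span {(p : W) ^ e0 i}) := by
    intro a b hrel
    have h0 : ((a, fun i => Submodule.Quotient.mk (b i)) :
        (Fin n → W) × ((i : ι) → W ⧸ Ideal.span {(p : W) ^ e0 i})) = 0 := by
      rw [← hcomp a b, hrel, map_zero]
    constructor
    · intro j; exact congrFun (congrArg Prod.fst h0) j
    · intro i
      have := congrFun (congrArg Prod.snd h0) i
      exact (Submodule.Quotient.mk_eq_zero _).mp this
  -- lift the generators
  choose g' hg' using fun j => hπsurj (gQ j)
  have hlift : ∀ i : ι, ∃ t : M, π t = tQ i ∧ ((p : 𝕊) ^ e0 i) • t = 0 := by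
    intro i
    by_cases he : e0 i = 0
    · refine ⟨0, ?_, smul_zero _⟩
      have h1 : (Submodule.Quotient.mk (1 : W) : W ⧸ Ideal.span {(p : W) ^ e0 i}) = 0 := by
        rw [Submodule.Quotient.mk_eq_zero, he, pow_zero, Ideal.span_singleton_one]
        trivial
      have h2 : tQ i = 0 := by
        rw [htQ]
        show ψ.symm (0, Pi.single i (Submodule.Quotient.mk 1)) = 0
        rw [h1, Pi.single_zero]
        exact map_zero ψ.symm
      rw [map_zero, h2]
    · obtain ⟨t0, ht0⟩ := hπsurj (tQ i)
      have hmem : ((p : 𝕊) ^ e0 i) • t0 ∈ uM := by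
        rw [← Submodule.Quotient.mk_eq_zero uM, ← Submodule.mkQ_apply]
        show π (((p : 𝕊) ^ e0 i) • t0) = 0
        rw [map_smul, ht0, hCp, ← hWsmul, hAQ]
      obtain ⟨z, hz⟩ := hmem
      have hz' : (PowerSeries.X : 𝕊) • z = ((p : 𝕊) ^ e0 i) • t0 := by
        simpa [LinearMap.lsmul_apply] using hz
      obtain ⟨w, hw⟩ := h (e0 i) (Nat.pos_of_ne_zero he) z ⟨t0, hz'⟩
      refine ⟨t0 - (PowerSeries.X : 𝕊) • w, ?_, ?_⟩
      · rw [map_sub, ht0, map_smul, hXQ, sub_zero]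
      · rw [smul_sub, ← hz', hw, smul_comm (PowerSeries.X : 𝕊) ((p : 𝕊) ^ e0 i) w, sub_self]
  choose t' ht'π ht'kill using hlift
  -- the comparison map
  let F1 : (Fin n → 𝕊) →ₗ[𝕊] M :=
    ∑ j, (LinearMap.proj j : (Fin n → 𝕊) →ₗ[𝕊] 𝕊).smulRight (g' j)
  let Ti : (i : ι) → (𝕊 ⧸ Ideal.span {(p : 𝕊) ^ e0 i}) →ₗ[𝕊] M := fun i =>
    Submodule.liftQ _ (LinearMap.toSpanSingleton 𝕊 M (t' i)) (by
      rw [Ideal.span_singleton_le_iff_mem, LinearMap.mem_ker,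
        LinearMap.toSpanSingleton_apply]
      exact ht'kill i)
  let F2 : ((i : ι) → 𝕊 ⧸ Ideal.span {(p : 𝕊) ^ e0 i}) →ₗ[𝕊] M :=
    ∑ i, (Ti i).comp (LinearMap.proj i)
  let Φ := F1.coprod F2
  have hΦ : ∀ (a : Fin n → 𝕊) (b : ι → 𝕊),
      Φ (a, fun i => Submodule.Quotient.mk (b i)) = ∑ j, a j • g' j + ∑ i, b i • t' i := by
    intro a b
    show F1 a + F2 (fun i => Submodule.Quotient.mk (b i)) = _
    congr 1
    · simp only [F1, LinearMap.sum_apply, LinearMap.smulRight_apply, LinearMap.proj_apply]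
    · simp only [F2, Ti, LinearMap.sum_apply, LinearMap.comp_apply, LinearMap.proj_apply,
        Submodule.liftQ_apply, LinearMap.toSpanSingleton_apply]
  -- surjectivity
  have hΦg : ∀ j, Φ ((Pi.single j 1 : Fin n → 𝕊), 0) = g' j := by
    intro j
    have h2 : (fun i => (Submodule.Quotient.mk ((0 : ι → 𝕊) i) :
        𝕊 ⧸ Ideal.span {(p : 𝕊) ^ e0 i})) = 0 :=
      funext fun i => Submodule.Quotient.mk_zero _
    have := hΦ (Pi.single j 1) 0
    rw [h2] at this
    rw [this]
    simp [Pi.single_apply, ite_smul]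
  have hΦt : ∀ i, Φ (0, Pi.single i (Submodule.Quotient.mk 1)) = t' i := by
    intro i
    have h2 : (fun i' => (Submodule.Quotient.mk ((Pi.single i 1 : ι → 𝕊) i') :
        𝕊 ⧸ Ideal.span {(p : 𝕊) ^ e0 i'})) = Pi.single i (Submodule.Quotient.mk 1) := by
      funext i'
      rcases eq_or_ne i' i with rfl | hne
      · simp
      · simp [Pi.single_eq_of_ne hne]
    have := hΦ 0 (Pi.single i 1)
    rw [h2] at this
    rw [this]
    simp [Pi.single_apply, ite_smul]
  have hsurj : Function.Surjective Φ := by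
    have hXjac : Ideal.span {(PowerSeries.X : 𝕊)} ≤ Ideal.jacobson ⊥ := by
      rw [IsLocalRing.jacobson_eq_maximalIdeal ⊥ bot_ne_top, Ideal.span_le,
        Set.singleton_subset_iff]
      show PowerSeries.X ∈ IsLocalRing.maximalIdeal 𝕊
      rw [IsLocalRing.mem_maximalIdeal, mem_nonunits_iff,
        PowerSeries.isUnit_iff_constantCoeff, PowerSeries.constantCoeff_X]
      exact not_isUnit_zero
    have hKu : uM ≤ LinearMap.range Φ ⊔ (Ideal.span {(PowerSeries.X : 𝕊)}) •
        (⊤ : Submodule 𝕊 M) := by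
      rintro x ⟨z, rfl⟩
      exact Submodule.mem_sup_right
        (Submodule.smul_mem_smul (Ideal.subset_span rfl) trivial)
    have hgen : ∀ m : M, m ∈ LinearMap.range Φ ⊔ (Ideal.span {(PowerSeries.X : 𝕊)}) •
        (⊤ : Submodule 𝕊 M) := by
      intro m
      have hle : Submodule.span W (Set.range gQ ∪ Set.range tQ) ≤
          (Submodule.map π (LinearMap.range Φ ⊔ (Ideal.span {(PowerSeries.X : 𝕊)}) •
            (⊤ : Submodule 𝕊 M))).restrictScalars W := by
        rw [Submodule.span_le]
        rintro q (⟨j, rfl⟩ | ⟨i, rfl⟩)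
        · exact ⟨g' j, Submodule.mem_sup_left ⟨(Pi.single j 1, 0), hΦg j⟩, hg' j⟩
        · exact ⟨t' i, Submodule.mem_sup_left
            ⟨(0, Pi.single i (Submodule.Quotient.mk 1)), hΦt i⟩, ht'π i⟩
      obtain ⟨m', hm', hm'eq⟩ := hle (hBQ (π m))
      have hδ : m - m' ∈ uM := by
        have h3 : m' - m ∈ uM := by
          rw [← Submodule.Quotient.eq uM]
          exact hm'eq
        simpa using uM.neg_mem h3
      have h4 : m = m' + (m - m') := by abel
      rw [h4]
      exact Submodule.add_mem _ hm' (hKu hδ)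
    have hfin : (⊤ : Submodule 𝕊 M).FG := Module.finite_def.mp inferInstance
    have := Submodule.le_of_le_smul_of_le_jacobson_bot hfin hXjac
      (fun m _ => hgen m)
    rw [← LinearMap.range_eq_top]
    exact top_le_iff.mp this
  -- injectivity
  have keyind : ∀ (m : ℕ) (a : Fin n → 𝕊) (b : ι → 𝕊),
      (∑ j, a j • g' j + ∑ i, b i • t' i = 0) →
      (∀ j, a j ∈ Ideal.span {(PowerSeries.X : 𝕊) ^ m}) ∧
      (∀ i, b i ∈ Ideal.span {(p : 𝕊) ^ e0 i} ⊔ Ideal.span {(PowerSeries.X : 𝕊) ^ m}) := by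
    intro m
    induction m with
    | zero =>
      intro a b _
      constructor
      · intro j; rw [pow_zero, Ideal.span_singleton_one]; trivial
      · intro i
        apply Submodule.mem_sup_right
        rw [pow_zero, Ideal.span_singleton_one]; trivial
    | succ m ih =>
      intro a b hrel
      have hQrel : ∑ j, (PowerSeries.constantCoeff (a j)) • gQ j
          + ∑ i, (PowerSeries.constantCoeff (b i)) • tQ i = 0 := by
        have h0 := congrArg π hrel
        rw [map_add, map_sum, map_sum, map_zero] at h0
        simp_rw [map_smul, hg', ht'π, hred] at h0
        exact h0
      obtain ⟨ha0, hb0⟩ := hCQ _ _ hQrel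
      set a' : Fin n → 𝕊 := fun j =>
        PowerSeries.mk fun q => PowerSeries.coeff (q+1) (a j) with ha'
      set b' : ι → 𝕊 := fun i =>
        PowerSeries.mk fun q => PowerSeries.coeff (q+1) (b i) with hb'
      have hadec : ∀ j, a j = a' j * PowerSeries.X := by
        intro j
        conv_lhs => rw [PowerSeries.eq_shift_mul_X_add_const (a j)]
        rw [ha0 j, map_zero, add_zero]
      have hbdec : ∀ i, ∃ w : W,
          b i = (p : 𝕊) ^ e0 i * PowerSeries.C w + b' i * PowerSeries.X := by
        intro i
        obtain ⟨w, hw⟩ := Ideal.mem_span_singleton'.mp (hb0 i)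
        refine ⟨w, ?_⟩
        conv_lhs => rw [PowerSeries.eq_shift_mul_X_add_const (b i)]
        have h5 : PowerSeries.C (PowerSeries.constantCoeff (b i))
            = (p : 𝕊) ^ e0 i * PowerSeries.C w := by
          rw [← hw, map_mul, hCp]
          ring
        rw [h5]
        ring
      choose bw hbw using hbdec
      have hrel' : ∑ j, a' j • g' j + ∑ i, b' i • t' i = 0 := by
        apply utf
        rw [smul_add, Finset.smul_sum, Finset.smul_sum]
        have hX1 : ∀ j, (PowerSeries.X : 𝕊) • (a' j • g' j) = a j • g' j := by
          intro j
          rw [smul_smul, mul_comm (PowerSeries.X : 𝕊) (a' j), ← hadec j]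
        have hX2 : ∀ i, (PowerSeries.X : 𝕊) • (b' i • t' i) = b i • t' i := by
          intro i
          conv_rhs => rw [hbw i]
          rw [add_smul, mul_comm ((p : 𝕊) ^ e0 i) (PowerSeries.C (bw i)), mul_smul,
            ht'kill, smul_zero, zero_add, smul_smul, mul_comm (PowerSeries.X : 𝕊) (b' i)]
        simp_rw [hX1, hX2]
        exact hrel
      obtain ⟨ham, hbm⟩ := ih a' b' hrel'
      constructor
      · intro j
        obtain ⟨c, hc⟩ := Ideal.mem_span_singleton.mp (ham j)
        exact Ideal.mem_span_singleton.mpr ⟨c, by rw [hadec j, hc]; ring⟩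
      · intro i
        obtain ⟨c1, hc1, c2, hc2, hc⟩ := Submodule.mem_sup.mp (hbm i)
        rw [hbw i, ← hc]
        refine Submodule.add_mem _ (Submodule.mem_sup_left ?_) ?_
        · exact Ideal.mem_span_singleton.mpr ⟨PowerSeries.C _, rfl⟩
        · rw [add_mul]
          refine Submodule.add_mem _ (Submodule.mem_sup_left ?_)
            (Submodule.mem_sup_right ?_)
          · exact Ideal.mul_mem_right _ _ hc1
          · obtain ⟨d, hd⟩ := Ideal.mem_span_singleton.mp hc2
            exact Ideal.mem_span_singleton.mpr ⟨d, by rw [hd]; ring⟩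
  have hinj : Function.Injective Φ := by
    rw [← LinearMap.ker_eq_bot, eq_bot_iff]
    rintro ⟨a, c⟩ hac
    rw [LinearMap.mem_ker] at hac
    choose b hb using fun i => Submodule.Quotient.mk_surjective _ (c i)
    have hrel : ∑ j, a j • g' j + ∑ i, b i • t' i = 0 := by
      rw [← hΦ a b,
        show (fun i => (Submodule.Quotient.mk (b i) : 𝕊 ⧸ Ideal.span {(p : 𝕊) ^ e0 i}))
          = c from funext hb]
      exact hac
    have haj : ∀ j, a j = 0 := by
      intro j
      apply PowerSeries.ext
      intro q
      have h1 := (keyind (q+1) a b hrel).1 j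
      rw [Ideal.mem_span_singleton, PowerSeries.X_pow_dvd_iff] at h1
      rw [map_zero]
      exact h1 q (Nat.lt_succ_self q)
    have hbi : ∀ i, b i ∈ Ideal.span {(p : 𝕊) ^ e0 i} := by
      intro i
      have hcoeff : ∀ q, ∃ w : W, PowerSeries.coeff q (b i) = ((p : W) ^ e0 i) * w := by
        intro q
        obtain ⟨c1, hc1, c2, hc2, hsum⟩ :=
          Submodule.mem_sup.mp ((keyind (q+1) a b hrel).2 i)
        obtain ⟨d1, hd1⟩ := Ideal.mem_span_singleton.mp hc1
        have h2 : PowerSeries.coeff q c2 = 0 := by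
          have := Ideal.mem_span_singleton.mp hc2
          rw [PowerSeries.X_pow_dvd_iff] at this
          exact this q (Nat.lt_succ_self q)
        refine ⟨PowerSeries.coeff q d1, ?_⟩
        rw [← hsum, map_add, h2, add_zero, hd1, hCp, PowerSeries.coeff_C_mul]
      choose wq hwq using hcoeff
      rw [Ideal.mem_span_singleton]
      refine ⟨PowerSeries.mk wq, ?_⟩
      apply PowerSeries.ext
      intro q
      rw [hwq, hCp, PowerSeries.coeff_C_mul, PowerSeries.coeff_mk]
    have hc0 : c = 0 := by
      funext i
      show c i = (0 : 𝕊 ⧸ Ideal.span {(p : 𝕊) ^ e0 i})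
      rw [← hb i, Submodule.Quotient.mk_eq_zero]
      exact hbi i
    rw [Submodule.mem_bot]
    exact Prod.ext (funext haj) hc0
  let E := LinearEquiv.ofBijective Φ ⟨hinj, hsurj⟩
  -- filter out the trivial factors
  haveI hss : ∀ i : {i : ι // ¬ e0 i ≠ 0}, Subsingleton (𝕊 ⧸ Ideal.span {(p : 𝕊) ^ e0 i.1}) := by
    intro i
    rw [Submodule.Quotient.subsingleton_iff, not_not.mp i.2, pow_zero,
      Ideal.span_singleton_one]
  let e1 : ((i : ι) → 𝕊 ⧸ Ideal.span {(p : 𝕊) ^ e0 i}) ≃ₗ[𝕊]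
      ((i : {i : ι // e0 i ≠ 0}) → 𝕊 ⧸ Ideal.span {(p : 𝕊) ^ e0 i.1}) ×
      ((i : {i : ι // ¬ e0 i ≠ 0}) → 𝕊 ⧸ Ideal.span {(p : 𝕊) ^ e0 i.1}) :=
    { Equiv.piEquivPiSubtypeProd _ _ with
      map_add' := fun _ _ => rfl
      map_smul' := fun _ _ => rfl }
  let e2 : (((i : {i : ι // e0 i ≠ 0}) → 𝕊 ⧸ Ideal.span {(p : 𝕊) ^ e0 i.1}) ×
      ((i : {i : ι // ¬ e0 i ≠ 0}) → 𝕊 ⧸ Ideal.span {(p : 𝕊) ^ e0 i.1})) ≃ₗ[𝕊]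
      ((i : {i : ι // e0 i ≠ 0}) → 𝕊 ⧸ Ideal.span {(p : 𝕊) ^ e0 i.1}) :=
    LinearEquiv.ofLinear (LinearMap.fst _ _ _) (LinearMap.prod LinearMap.id 0)
      (by apply LinearMap.ext; intro x; rfl)
      (by apply LinearMap.ext; rintro ⟨x, y⟩; exact Prod.ext rfl (Subsingleton.elim _ _))
  let τ : Fin (Fintype.card {i : ι // e0 i ≠ 0}) ≃ {i : ι // e0 i ≠ 0} :=
    (Fintype.equivFin _).symm
  let e3 : ((j : Fin (Fintype.card {i : ι // e0 i ≠ 0})) →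
        𝕊 ⧸ Ideal.span {(p : 𝕊) ^ e0 (τ j).1}) ≃ₗ[𝕊]
      ((i : {i : ι // e0 i ≠ 0}) → 𝕊 ⧸ Ideal.span {(p : 𝕊) ^ e0 i.1}) :=
    LinearEquiv.piCongrLeft 𝕊 (fun i : {i : ι // e0 i ≠ 0} => 𝕊 ⧸ Ideal.span {(p : 𝕊) ^ e0 i.1}) τ
  refine ⟨n, Fintype.card {i : ι // e0 i ≠ 0}, fun j => e0 (τ j).1,
    fun j => Nat.one_le_iff_ne_zero.mpr (τ j).2, ⟨?_⟩⟩
  exact E.symm.trans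
    (LinearEquiv.prodCongr (LinearEquiv.refl 𝕊 (Fin n → 𝕊)) (e1.trans (e2.trans e3.symm)))

end Key

theorem stmt3 (p : ℕ) [Fact p.Prime] (k : Type*) [Field k] [CharP k p] [PerfectField k]
    (M : Type*) [AddCommGroup M] [Module (PowerSeries (WittVector p k)) M]
    [Module.Finite (PowerSeries (WittVector p k)) M]
    (N : ℕ)
    (htor : ∀ x : M, (∃ f : PowerSeries (WittVector p k), f ≠ 0 ∧ f • x = 0) →
      ((p : PowerSeries (WittVector p k)) ^ N) • x = 0)
    (h : ∀ n : ℕ, 0 < n → ∀ x : M,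
      (∃ y : M, (PowerSeries.X : PowerSeries (WittVector p k)) • x =
        ((p : PowerSeries (WittVector p k)) ^ n) • y) →
      ∃ y : M, x = ((p : PowerSeries (WittVector p k)) ^ n) • y) :
    ∃ (r s : ℕ) (e : Fin s → ℕ), (∀ i, 1 ≤ e i) ∧
      Nonempty (M ≃ₗ[PowerSeries (WittVector p k)]
        ((Fin r → PowerSeries (WittVector p k)) ×
          ((i : Fin s) → PowerSeries (WittVector p k) ⧸
            Ideal.span {((p : PowerSeries (WittVector p k)) ^ (e i))}))) :=
  key_stmt3 p k M N htor h
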